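/- arXiv:1307.6332 — 3 statements merged into one kernel-verified Lean document; each statement's English description precedes it below -/
import Mathlib

section
/- Let g(x) = σ/(x+b) for σ, b > 0. The autocorrelation ρ(h) := (∫₀^∞ g(x+h)g(x) dx) / (∫₀^∞ g(x)² dx) equals (b/h) · log(1 + h/b) for all h > 0. -/
open MeasureTheory Set Filter

lemma aux_integral_one (σ b h : ℝ) (hσ : 0 < σ) (hb : 0 < b) (hh : 0 < h) :
    (∫ x in Ioi (0:ℝ), (σ / (x + h + b)) * (σ / (x + b)))
      = σ ^ 2 / h * Real.log ((h + b) / b) := by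
  have hderiv : ∀ x ∈ Ici (0:ℝ), HasDerivAt
      (fun x => σ ^ 2 / h * (Real.log (x + b) - Real.log (x + h + b)))
      ((σ / (x + h + b)) * (σ / (x + b))) x := by
    intro x hx
    have hx0 : (0:ℝ) ≤ x := hx
    have h1 : x + b ≠ 0 := by positivity
    have h2 : x + h + b ≠ 0 := by positivity
    have d1 : HasDerivAt (fun x : ℝ => Real.log (x + b)) (1 / (x + b)) x := by
      simpa using (((hasDerivAt_id x).add_const b).log h1)
    have d2 : HasDerivAt (fun x : ℝ => Real.log (x + h + b)) (1 / (x + h + b)) x := by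
      simpa using ((((hasDerivAt_id x).add_const h).add_const b).log h2)
    have : HasDerivAt (fun x => σ ^ 2 / h * (Real.log (x + b) - Real.log (x + h + b)))
        (σ ^ 2 / h * (1 / (x + b) - 1 / (x + h + b))) x :=
      ((d1.sub d2).const_mul (σ ^ 2 / h))
    convert this using 1
    field_simp
    ring
  have hpos : ∀ x ∈ Ioi (0:ℝ), 0 ≤ (σ / (x + h + b)) * (σ / (x + b)) := by
    intro x hx
    have : (0:ℝ) < x := hx
    positivity
  have htend : Tendsto (fun x => σ ^ 2 / h * (Real.log (x + b) - Real.log (x + h + b)))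
      atTop (nhds 0) := by
    have hq : Tendsto (fun x : ℝ => h / (x + b)) atTop (nhds 0) :=
      tendsto_const_nhds.div_atTop (tendsto_atTop_add_const_right atTop b tendsto_id)
    have hlog : Tendsto (fun x : ℝ => Real.log (1 + h / (x + b))) atTop (nhds 0) := by
      have : Tendsto (fun x : ℝ => 1 + h / (x + b)) atTop (nhds 1) := by
        simpa using tendsto_const_nhds.add hq
      simpa [Function.comp_def] using (Real.continuousAt_log one_ne_zero).tendsto.comp this
    have heq : ∀ᶠ x : ℝ in atTop,
        -(σ ^ 2 / h * Real.log (1 + h / (x + b)))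
          = σ ^ 2 / h * (Real.log (x + b) - Real.log (x + h + b)) := by
      filter_upwards [eventually_ge_atTop (0:ℝ)] with x hx
      have h1 : x + b ≠ 0 := by positivity
      have h2 : x + h + b ≠ 0 := by positivity
      have : (1 : ℝ) + h / (x + b) = (x + h + b) / (x + b) := by field_simp; ring
      rw [this, Real.log_div h2 h1]
      ring
    have := ((hlog.const_mul (σ ^ 2 / h)).neg)
    simpa using this.congr' heq
  have := integral_Ioi_of_hasDerivAt_of_nonneg' hderiv hpos htend
  rw [this]
  have hb' : b ≠ 0 := ne_of_gt hb
  have hhb : h + b ≠ 0 := by positivity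
  rw [Real.log_div hhb hb']
  simp
  ring

lemma aux_integral_two (σ b : ℝ) (hσ : 0 < σ) (hb : 0 < b) :
    (∫ x in Ioi (0:ℝ), (σ / (x + b)) ^ 2) = σ ^ 2 / b := by
  have hderiv : ∀ x ∈ Ici (0:ℝ), HasDerivAt
      (fun x => -(σ ^ 2) / (x + b)) ((σ / (x + b)) ^ 2) x := by
    intro x hx
    have hx0 : (0:ℝ) ≤ x := hx
    have h1 : x + b ≠ 0 := by positivity
    have d : HasDerivAt (fun x : ℝ => (x + b)⁻¹) (-1 / (x + b) ^ 2) x := by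
      simpa [Pi.inv_def] using ((hasDerivAt_id x).add_const b).inv h1
    have hD : HasDerivAt (fun y : ℝ => -(σ ^ 2) * (y + b)⁻¹) (-(σ ^ 2) * (-1 / (x + b) ^ 2)) x :=
      d.const_mul (-(σ ^ 2))
    have hfun : (fun y : ℝ => -(σ ^ 2) * (y + b)⁻¹) = fun y : ℝ => -(σ ^ 2) / (y + b) := by
      funext y; rw [div_eq_mul_inv]
    rw [hfun] at hD
    convert hD using 1
    field_simp
  have hpos : ∀ x ∈ Ioi (0:ℝ), 0 ≤ (σ / (x + b)) ^ 2 := fun x _ => sq_nonneg _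
  have htend : Tendsto (fun x : ℝ => -(σ ^ 2) / (x + b)) atTop (nhds 0) :=
    tendsto_const_nhds.div_atTop (tendsto_atTop_add_const_right atTop b tendsto_id)
  have := integral_Ioi_of_hasDerivAt_of_nonneg' hderiv hpos htend
  rw [this]
  field_simp
  ring

theorem bjerksund_kernel_autocorrelation (σ b h : ℝ) (hσ : 0 < σ) (hb : 0 < b)
    (hh : 0 < h) :
    (∫ x in Ioi (0:ℝ), (σ / (x + h + b)) * (σ / (x + b))) /
        (∫ x in Ioi (0:ℝ), (σ / (x + b)) ^ 2)
      = (b / h) * Real.log (1 + h / b) := by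
  rw [aux_integral_one σ b h hσ hb hh, aux_integral_two σ b hσ hb]
  have h1 : (1:ℝ) + h / b = (h + b) / b := by field_simp; ring
  rw [h1]
  have hσ2 : σ ^ 2 ≠ 0 := by positivity
  field_simp
end

section
/- For ν > 1/2, λ > 0 and h > 0, ∫₀^∞ (t(t+h))^{ν−1} e^{−λt} dt = (1/√π) · (h/λ)^{ν−1/2} · e^{λh/2} · Γ(ν) · K_{1/2−ν}(λh/2), where K_μ denotes the modified Bessel function of the third kind. -/
open MeasureTheory Set Real

/-- The modified Bessel function of the third kind (Basset's integral
representation): `K_μ(x) = ∫₀^∞ exp(-x cosh t) cosh(μ t) dt` for `x > 0`. -/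
noncomputable def besselK (μ x : ℝ) : ℝ :=
  ∫ t in Ioi (0:ℝ), Real.exp (-x * Real.cosh t) * Real.cosh (μ * t)

lemma img_psi (p q : ℝ) (hp : 0 < p) (hq : 0 < q) :
    (fun s : ℝ => p * s - q / s) '' Ioi 0 = univ := by
  ext u
  simp only [mem_univ, iff_true]
  set R := Real.sqrt (u^2 + 4*p*q) with hR
  have hR2 : R^2 = u^2 + 4*p*q := Real.sq_sqrt (by positivity)
  have hRu : -u < R := by
    nlinarith [Real.sqrt_nonneg (u^2+4*p*q), Real.sq_sqrt (show (0:ℝ) ≤ u^2+4*p*q by positivity)]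
  have hur : (0:ℝ) < u + R := by linarith
  have hs : (0:ℝ) < (u + R) / (2*p) := div_pos hur (by linarith)
  refine ⟨(u + R)/(2*p), hs, ?_⟩
  field_simp [hur.ne']
  ring_nf
  nlinarith [hR2]

lemma psi_deriv (p q : ℝ) {s : ℝ} (hs : s ≠ 0) :
    HasDerivAt (fun s : ℝ => p * s - q / s) (p + q / s^2) s := by
  have h1 : HasDerivAt (fun s : ℝ => p * s) p s := by
    simpa using (hasDerivAt_id s).const_mul p
  have h2 : HasDerivAt (fun s : ℝ => q / s) (q * (-(s^2)⁻¹)) s := by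
    simpa [div_eq_mul_inv] using (hasDerivAt_inv hs).const_mul q
  have := h1.sub h2
  exact this.congr_deriv (by ring)

lemma psi_injOn (p q : ℝ) (hp : 0 < p) (hq : 0 < q) :
    InjOn (fun s : ℝ => p * s - q / s) (Ioi 0) := by
  have : StrictMonoOn (fun s : ℝ => p * s - q / s) (Ioi 0) := by
    intro x hx y hy hxy
    have hx0 : (0:ℝ) < x := hx
    have hy0 : (0:ℝ) < y := hy
    have h1 : p * x < p * y := by nlinarith
    have h2 : q / y < q / x := div_lt_div_of_pos_left hq hx0 hxy
    simp only
    linarith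
  exact this.injOn

lemma key_gauss (p q : ℝ) (hp : 0 < p) (hq : 0 < q) :
    ∫ s in Ioi (0:ℝ), (p + q / s^2) * Real.exp (-(p*s - q/s)^2) = Real.sqrt π := by
  have hderiv : ∀ s ∈ Ioi (0:ℝ),
      HasDerivWithinAt (fun s : ℝ => p * s - q / s) (p + q / s^2) (Ioi 0) s :=
    fun s hs => (psi_deriv p q (ne_of_gt hs)).hasDerivWithinAt
  have h := integral_image_eq_integral_abs_deriv_smul measurableSet_Ioi hderiv
    (psi_injOn p q hp hq) (fun u => Real.exp (-u^2))
  rw [img_psi p q hp hq] at h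
  have h2 : ∫ u in (univ : Set ℝ), Real.exp (-u^2) = Real.sqrt π := by
    rw [setIntegral_univ]
    simpa using integral_gaussian 1
  rw [h2] at h
  rw [h]
  apply setIntegral_congr_fun measurableSet_Ioi
  intro s hs
  have hs0 : (0:ℝ) < s := hs
  have : |p + q / s^2| = p + q / s^2 := abs_of_pos (by positivity)
  simp [this, smul_eq_mul]

lemma refl_int (p q : ℝ) (hp : 0 < p) (hq : 0 < q) :
    ∫ s in Ioi (0:ℝ), Real.exp (-(p*s - q/s)^2)
      = ∫ s in Ioi (0:ℝ), (q/(p*s^2)) * Real.exp (-(p*s - q/s)^2) := by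
  have himg : (fun s : ℝ => q / (p * s)) '' Ioi 0 = Ioi 0 := by
    ext x
    constructor
    · rintro ⟨s, hs, rfl⟩
      have hs0 : (0:ℝ) < s := hs
      exact mem_Ioi.2 (by positivity)
    · intro hx
      have hx0 : (0:ℝ) < x := hx
      exact ⟨q/(p*x), mem_Ioi.2 (by positivity), by field_simp⟩
  have hderiv : ∀ s ∈ Ioi (0:ℝ),
      HasDerivWithinAt (fun s : ℝ => q / (p * s)) (-(q/(p*s^2))) (Ioi 0) s := by
    intro s hs
    have hs0 : s ≠ 0 := ne_of_gt (mem_Ioi.1 hs)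
    have : HasDerivAt (fun s : ℝ => q / (p * s)) ((q/p) * (-(s^2)⁻¹)) s := by
      have := (hasDerivAt_inv hs0).const_mul (q/p)
      convert this using 2
      · rfl
      · rfl
      · ring
    refine HasDerivAt.hasDerivWithinAt ?_
    exact this.congr_deriv (by ring)
  have hinj : InjOn (fun s : ℝ => q / (p * s)) (Ioi 0) := by
    intro x hx y hy hxy
    have hx0 : (0:ℝ) < x := hx
    have hy0 : (0:ℝ) < y := hy
    simp only at hxy
    rw [div_eq_div_iff (by positivity) (by positivity)] at hxy
    have h1 := mul_left_cancel₀ (ne_of_gt hq) hxy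
    exact (mul_left_cancel₀ (ne_of_gt hp) h1).symm
  have h := integral_image_eq_integral_abs_deriv_smul measurableSet_Ioi hderiv hinj
    (fun u => Real.exp (-(p*u - q/u)^2))
  rw [himg] at h
  rw [h]
  apply setIntegral_congr_fun measurableSet_Ioi
  intro s hs
  have hs0 : (0:ℝ) < s := hs
  have habs : |(-(q/(p*s^2)))| = q/(p*s^2) := by
    rw [abs_neg]; exact abs_of_pos (by positivity)
  have harg : (p * (q / (p * s)) - q / (q / (p * s)))^2 = (p*s - q/s)^2 := by
    have : p * (q / (p * s)) - q / (q / (p * s)) = -(p*s - q/s) := by field_simp; ring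
    rw [this, neg_sq]
  simp only [habs, smul_eq_mul, harg]

lemma integrableOn_gauss_aux (p q : ℝ) (hp : 0 < p) (hq : 0 < q) :
    IntegrableOn (fun s : ℝ => (p + q / s^2) * Real.exp (-(p*s - q/s)^2)) (Ioi 0) := by
  have hderiv : ∀ s ∈ Ioi (0:ℝ),
      HasDerivWithinAt (fun s : ℝ => p * s - q / s) (p + q / s^2) (Ioi 0) s :=
    fun s hs => (psi_deriv p q (ne_of_gt hs)).hasDerivWithinAt
  have h := (integrableOn_image_iff_integrableOn_abs_deriv_smul measurableSet_Ioi hderiv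
    (psi_injOn p q hp hq) (fun u => Real.exp (-u^2)))
  rw [img_psi p q hp hq] at h
  have hg : IntegrableOn (fun u : ℝ => Real.exp (-u^2)) univ := by
    rw [integrableOn_univ]
    simpa using integrable_exp_neg_mul_sq (show (0:ℝ) < 1 by norm_num)
  have := h.1 hg
  apply this.congr_fun ?_ measurableSet_Ioi
  intro s hs
  have hs0 : (0:ℝ) < s := hs
  have : |p + q / s^2| = p + q / s^2 := abs_of_pos (by positivity)
  simp [this, smul_eq_mul]

lemma integrableOn_exp_psi (p q : ℝ) (hp : 0 < p) (hq : 0 < q) :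
    IntegrableOn (fun s : ℝ => Real.exp (-(p*s - q/s)^2)) (Ioi 0) := by
  apply ((integrableOn_gauss_aux p q hp hq).const_mul (1/p)).mono' ?_ ?_
  · apply Measurable.aestronglyMeasurable
    fun_prop
  · filter_upwards [ae_restrict_mem measurableSet_Ioi] with s hs
    have hs0 : (0:ℝ) < s := hs
    have e1 : (0:ℝ) < Real.exp (-(p*s - q/s)^2) := Real.exp_pos _
    rw [Real.norm_eq_abs, abs_of_pos e1]
    have key : p * Real.exp (-(p*s - q/s)^2) ≤ (p + q/s^2) * Real.exp (-(p*s - q/s)^2) := by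
      have : (0:ℝ) ≤ q/s^2 := by positivity
      nlinarith
    calc Real.exp (-(p*s - q/s)^2) = (1/p) * (p * Real.exp (-(p*s - q/s)^2)) := by field_simp
    _ ≤ (1/p) * ((p + q/s^2) * Real.exp (-(p*s - q/s)^2)) :=
        mul_le_mul_of_nonneg_left key (by positivity)

lemma integrableOn_refl_part (p q : ℝ) (hp : 0 < p) (hq : 0 < q) :
    IntegrableOn (fun s : ℝ => (q/(p*s^2)) * Real.exp (-(p*s - q/s)^2)) (Ioi 0) := by
  apply ((integrableOn_gauss_aux p q hp hq).const_mul (1/p)).mono' ?_ ?_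
  · apply Measurable.aestronglyMeasurable
    fun_prop
  · filter_upwards [ae_restrict_mem measurableSet_Ioi] with s hs
    have hs0 : (0:ℝ) < s := hs
    have e1 : (0:ℝ) < Real.exp (-(p*s - q/s)^2) := Real.exp_pos _
    rw [Real.norm_eq_abs, abs_of_pos (by positivity)]
    have key : q/(p*s^2) ≤ (1/p) * (p + q/s^2) := by
      rw [div_le_iff₀ (by positivity : (0:ℝ) < p*s^2)]
      field_simp
      nlinarith [mul_pos hp (pow_pos hs0 2)]
    calc (q/(p*s^2)) * Real.exp (-(p*s - q/s)^2)
        ≤ ((1/p) * (p + q/s^2)) * Real.exp (-(p*s - q/s)^2) :=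
          mul_le_mul_of_nonneg_right key e1.le
    _ = (1/p) * ((p + q/s^2) * Real.exp (-(p*s - q/s)^2)) := by ring

lemma exp_psi_integral (p q : ℝ) (hp : 0 < p) (hq : 0 < q) :
    ∫ s in Ioi (0:ℝ), Real.exp (-(p*s - q/s)^2) = Real.sqrt π / (2*p) := by
  set I := ∫ s in Ioi (0:ℝ), Real.exp (-(p*s - q/s)^2) with hI
  have h2I : 2 * I = Real.sqrt π / p := by
    have hadd : I + I = ∫ s in Ioi (0:ℝ),
        (Real.exp (-(p*s - q/s)^2) + (q/(p*s^2)) * Real.exp (-(p*s - q/s)^2)) := by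
      rw [integral_add (integrableOn_exp_psi p q hp hq) (integrableOn_refl_part p q hp hq)]
      rw [hI]
      congr 1
      exact refl_int p q hp hq
    have hcong : ∫ s in Ioi (0:ℝ),
        (Real.exp (-(p*s - q/s)^2) + (q/(p*s^2)) * Real.exp (-(p*s - q/s)^2))
        = ∫ s in Ioi (0:ℝ), (1/p) * ((p + q/s^2) * Real.exp (-(p*s - q/s)^2)) := by
      apply setIntegral_congr_fun measurableSet_Ioi
      intro s hs
      have hs0 : (0:ℝ) < s := hs
      field_simp
    rw [two_mul, hadd, hcong, MeasureTheory.integral_const_mul, key_gauss p q hp hq]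
    rw [one_div, inv_mul_eq_div]
  have hp2 : (0:ℝ) < 2*p := by positivity
  field_simp at h2I ⊢
  linarith

lemma img_sq : (fun s : ℝ => s^2) '' Ioi 0 = Ioi 0 := by
  ext x
  constructor
  · rintro ⟨s, hs, rfl⟩; exact pow_pos (show (0:ℝ) < s from hs) 2
  · intro hx; exact ⟨Real.sqrt x, Real.sqrt_pos.2 hx, Real.sq_sqrt hx.le⟩

lemma glasser (a b : ℝ) (ha : 0 < a) (hb : 0 < b) :
    ∫ t in Ioi (0:ℝ), t ^ (-(1:ℝ)/2) * Real.exp (-(a*t) - b/t)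
      = Real.sqrt (π/a) * Real.exp (-(2 * Real.sqrt (a*b))) := by
  set p := Real.sqrt a with hpd
  set q := Real.sqrt b with hqd
  have hp : 0 < p := Real.sqrt_pos.2 ha
  have hq : 0 < q := Real.sqrt_pos.2 hb
  have hp2 : p^2 = a := Real.sq_sqrt ha.le
  have hq2 : q^2 = b := Real.sq_sqrt hb.le
  have hab : Real.sqrt (a*b) = p*q := Real.sqrt_mul ha.le b
  have hderiv : ∀ s ∈ Ioi (0:ℝ), HasDerivWithinAt (fun s:ℝ => s^2) (2*s) (Ioi 0) s := by
    intro s hs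
    simpa using (hasDerivAt_pow 2 s).hasDerivWithinAt
  have hinj : InjOn (fun s:ℝ => s^2) (Ioi 0) := by
    intro x hx y hy hxy
    have hx0 : (0:ℝ) < x := hx
    have hy0 : (0:ℝ) < y := hy
    simp only at hxy
    nlinarith [sq_nonneg (x - y), sq_nonneg (x + y)]
  have h := integral_image_eq_integral_abs_deriv_smul measurableSet_Ioi hderiv hinj
    (fun t => t ^ (-(1:ℝ)/2) * Real.exp (-(a*t) - b/t))
  rw [img_sq] at h
  rw [h]
  have hcong : ∫ s in Ioi (0:ℝ),
      |2*s| • ((fun t : ℝ => t ^ (-(1:ℝ)/2) * Real.exp (-(a*t) - b/t)) (s^2))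
      = ∫ s in Ioi (0:ℝ), (2 * Real.exp (-(2 * (p*q)))) * Real.exp (-(p*s - q/s)^2) := by
    apply setIntegral_congr_fun measurableSet_Ioi
    intro s hs
    have hs0 : (0:ℝ) < s := hs
    have h1 : ((s^2:ℝ)) ^ (-(1:ℝ)/2) = s⁻¹ := by
      rw [← Real.rpow_natCast s 2, ← Real.rpow_mul hs0.le]
      norm_num
      exact Real.rpow_neg_one s
    have h2 : -(a*s^2) - b/s^2 = (-(p*s - q/s)^2) + (-(2 * (p*q))) := by
      rw [← hp2, ← hq2]
      field_simp
      ring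
    simp only [h1, h2, Real.exp_add, smul_eq_mul, abs_of_pos (by positivity : (0:ℝ) < 2*s)]
    field_simp
  rw [hcong, MeasureTheory.integral_const_mul, exp_psi_integral p q hp hq, hab]
  rw [show π/a = π/p^2 by rw [hp2], Real.sqrt_div (by positivity : (0:ℝ) ≤ π) _,
    Real.sqrt_sq hp.le]
  field_simp

lemma int_rpow_exp (s a : ℝ) (hs : -1 < s) (ha : 0 < a) :
    IntegrableOn (fun t : ℝ => t ^ s * Real.exp (-(a*t))) (Ioi 0) := by
  have := integrableOn_rpow_mul_exp_neg_mul_rpow hs (zero_lt_one : (0:ℝ) < 1) ha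
  simpa [Real.rpow_one] using this

lemma int_rpow_exp_exp (s a b : ℝ) (hs : -1 < s) (ha : 0 < a) (hb : 0 ≤ b) :
    IntegrableOn (fun t : ℝ => t ^ s * Real.exp (-(a*t) - b/t)) (Ioi 0) := by
  apply (int_rpow_exp s a hs ha).mono' ?_ ?_
  · apply Measurable.aestronglyMeasurable
    fun_prop
  · filter_upwards [ae_restrict_mem measurableSet_Ioi] with t ht
    have ht0 : (0:ℝ) < t := ht
    rw [Real.norm_eq_abs, abs_of_nonneg (by positivity)]
    apply mul_le_mul_of_nonneg_left ?_ (by positivity)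
    apply Real.exp_le_exp.2
    have : (0:ℝ) ≤ b/t := by positivity
    linarith

/-- `exp (-z) ≤ (n/z)^n` for `z > 0`. -/
lemma exp_neg_le_pow (n : ℕ) (z : ℝ) (hz : 0 < z) :
    Real.exp (-z) ≤ ((n:ℝ)/z)^n := by
  rcases Nat.eq_zero_or_pos n with rfl | hn
  · simp only [pow_zero]
    calc Real.exp (-z) ≤ Real.exp 0 := Real.exp_le_exp.2 (by linarith)
    _ = 1 := Real.exp_zero
  have h1 : z/(n:ℝ) ≤ Real.exp (z/(n:ℝ)) := (Real.add_one_le_exp _).trans' (by linarith)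
  have h2 : (z/(n:ℝ))^n ≤ Real.exp z := by
    calc (z/(n:ℝ))^n ≤ (Real.exp (z/(n:ℝ)))^n :=
          pow_le_pow_left₀ (by positivity) h1 n
    _ = Real.exp z := by
        rw [← Real.exp_nat_mul]
        congr 1
        field_simp
  rw [Real.exp_neg]
  rw [show ((n:ℝ)/z)^n = ((z/(n:ℝ))^n)⁻¹ by rw [← inv_pow, inv_div]]
  exact inv_anti₀ (by positivity) h2

lemma int_Ioi1_basset (s a : ℝ) (ha : 0 < a) :
    IntegrableOn (fun u : ℝ => u ^ s * Real.exp (-(a*(u+u⁻¹)))) (Ioi 1) := by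
  apply ((int_rpow_exp |s| a (lt_of_lt_of_le (by norm_num) (abs_nonneg s)) ha).mono_set
    (Ioi_subset_Ioi zero_le_one)).mono' ?_ ?_
  · apply Measurable.aestronglyMeasurable
    fun_prop
  · filter_upwards [ae_restrict_mem measurableSet_Ioi] with u hu
    have hu1 : (1:ℝ) < u := hu
    have hu0 : (0:ℝ) < u := by linarith
    rw [Real.norm_eq_abs, abs_of_nonneg (by positivity)]
    apply mul_le_mul
    · exact Real.rpow_le_rpow_of_exponent_le hu1.le (le_abs_self s)
    · apply Real.exp_le_exp.2
      have : (0:ℝ) ≤ a * u⁻¹ := by positivity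
      nlinarith
    · positivity
    · positivity

lemma int_Ioo01_basset (s a : ℝ) (ha : 0 < a) :
    IntegrableOn (fun u : ℝ => u ^ s * Real.exp (-(a*(u+u⁻¹)))) (Ioo 0 1) := by
  set n : ℕ := ⌈|s|⌉₊ + 1 with hn
  have hns : -1 < s + n := by
    have : |s| ≤ ⌈|s|⌉₊ := Nat.le_ceil _
    have := neg_abs_le s
    have : -(⌈|s|⌉₊:ℝ) ≤ s := by linarith
    push_cast [hn]
    linarith
  have hbase : IntegrableOn (fun u : ℝ => ((n:ℝ)/a)^n * u ^ (s + n)) (Ioo 0 1) := by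
    apply Integrable.const_mul
    have : IntervalIntegrable (fun u : ℝ => u ^ (s+n)) volume 0 1 :=
      intervalIntegral.intervalIntegrable_rpow' hns
    have h2 := (intervalIntegrable_iff_integrableOn_Ioc_of_le zero_le_one).1 this
    exact h2.mono_set Ioo_subset_Ioc_self
  apply hbase.mono' ?_ ?_
  · apply Measurable.aestronglyMeasurable
    fun_prop
  · filter_upwards [ae_restrict_mem measurableSet_Ioo] with u hu
    obtain ⟨hu0, hu1⟩ := hu
    rw [Real.norm_eq_abs, abs_of_nonneg (by positivity)]
    have key : Real.exp (-(a*(u+u⁻¹))) ≤ ((n:ℝ)/a)^n * u^(n:ℕ) := by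
      have h1 : Real.exp (-(a*(u+u⁻¹))) ≤ Real.exp (-(a*u⁻¹)) := by
        apply Real.exp_le_exp.2
        have : (0:ℝ) ≤ a * u := by positivity
        nlinarith
      have h2 : Real.exp (-(a*u⁻¹)) ≤ ((n:ℝ)/(a*u⁻¹))^n :=
        exp_neg_le_pow n _ (by positivity)
      have h3 : ((n:ℝ)/(a*u⁻¹))^n = ((n:ℝ)/a)^n * u^(n:ℕ) := by
        rw [← mul_pow]
        congr 1
        field_simp
      linarith
    calc u ^ s * Real.exp (-(a*(u+u⁻¹))) ≤ u ^ s * (((n:ℝ)/a)^n * u^(n:ℕ)) :=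
          mul_le_mul_of_nonneg_left key (by positivity)
    _ = ((n:ℝ)/a)^n * u ^ (s + n) := by
        rw [Real.rpow_add hu0, Real.rpow_natCast]
        ring

lemma besselK_neg (μ x : ℝ) : besselK (-μ) x = besselK μ x := by
  unfold besselK
  apply setIntegral_congr_fun measurableSet_Ioi
  intro t _
  simp [neg_mul, Real.cosh_neg]

lemma img_exp : Real.exp '' Ioi 0 = Ioi 1 := by
  ext x
  constructor
  · rintro ⟨s, hs, rfl⟩; exact Real.one_lt_exp_iff.mpr hs
  · intro hx; exact ⟨Real.log x, Real.log_pos hx, Real.exp_log (lt_trans one_pos hx)⟩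

lemma besselK_eq_Ioi1 (μ x : ℝ) :
    besselK μ x = ∫ u in Ioi (1:ℝ),
      (1/2) * ((u^(μ-1) + u^(-μ-1)) * Real.exp (-((x/2)*(u + u⁻¹)))) := by
  have hderiv : ∀ t ∈ Ioi (0:ℝ), HasDerivWithinAt Real.exp (Real.exp t) (Ioi 0) t :=
    fun t _ => (Real.hasDerivAt_exp t).hasDerivWithinAt
  have hinj : InjOn Real.exp (Ioi 0) := Real.exp_injective.injOn
  have h := integral_image_eq_integral_abs_deriv_smul measurableSet_Ioi hderiv hinj
    (fun u : ℝ => (1/2) * ((u^(μ-1) + u^(-μ-1)) * Real.exp (-((x/2)*(u + u⁻¹)))))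
  rw [img_exp] at h
  rw [h]
  unfold besselK
  apply setIntegral_congr_fun measurableSet_Ioi
  intro t _
  have e1 : (Real.exp t)^(μ-1) = Real.exp ((μ-1)*t) := by
    rw [Real.rpow_def_of_pos (Real.exp_pos t), Real.log_exp]
    ring_nf
  have e2 : (Real.exp t)^(-μ-1) = Real.exp ((-μ-1)*t) := by
    rw [Real.rpow_def_of_pos (Real.exp_pos t), Real.log_exp]
    ring_nf
  have A : Real.exp t * Real.exp ((μ-1)*t) = Real.exp (μ*t) := by
    rw [← Real.exp_add]; congr 1; ring
  have B : Real.exp t * Real.exp ((-μ-1)*t) = Real.exp (-(μ*t)) := by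
    rw [← Real.exp_add]; congr 1; ring
  have C : -((x/2)*(Real.exp t + (Real.exp t)⁻¹)) = -x * Real.cosh t := by
    rw [Real.cosh_eq, Real.exp_neg]; ring
  simp only [smul_eq_mul, e1, e2, C, Real.cosh_eq (μ*t), abs_of_pos (Real.exp_pos t)]
  linear_combination (-(Real.exp (-x * Real.cosh t))/2) * A + (-(Real.exp (-x * Real.cosh t))/2) * B

lemma img_inv : (fun u : ℝ => u⁻¹) '' Ioi 1 = Ioo 0 1 := by
  ext x
  constructor
  · rintro ⟨s, hs, rfl⟩
    exact ⟨inv_pos.2 (lt_trans one_pos hs), inv_lt_one_of_one_lt₀ hs⟩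
  · rintro ⟨h0, h1⟩
    exact ⟨x⁻¹, one_lt_inv₀ h0 |>.mpr h1, inv_inv x⟩

lemma refl_Ioo01 (μ x : ℝ) :
    ∫ u in Ioo (0:ℝ) 1, u^(-μ-1) * Real.exp (-((x/2)*(u + u⁻¹)))
      = ∫ w in Ioi (1:ℝ), w^(μ-1) * Real.exp (-((x/2)*(w + w⁻¹))) := by
  have hderiv : ∀ w ∈ Ioi (1:ℝ),
      HasDerivWithinAt (fun u : ℝ => u⁻¹) (-(w^2)⁻¹) (Ioi 1) w := by
    intro w hw
    exact (hasDerivAt_inv (lt_trans zero_lt_one (mem_Ioi.1 hw)).ne').hasDerivWithinAt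
  have hinj : InjOn (fun u : ℝ => u⁻¹) (Ioi 1) := inv_injective.injOn
  have h := integral_image_eq_integral_abs_deriv_smul measurableSet_Ioi hderiv hinj
    (fun u : ℝ => u^(-μ-1) * Real.exp (-((x/2)*(u + u⁻¹))))
  rw [img_inv] at h
  rw [h]
  apply setIntegral_congr_fun measurableSet_Ioi
  intro w hw
  have hw1 : (1:ℝ) < w := hw
  have hw0 : (0:ℝ) < w := by linarith
  have h1 : (w⁻¹ : ℝ)^(-μ-1) = w^(μ+1) := by
    rw [← Real.rpow_neg_one w, ← Real.rpow_mul hw0.le]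
    ring_nf
  have h2 : |(-(w^2)⁻¹ : ℝ)| = w^((-2:ℝ)) := by
    rw [abs_neg, abs_of_pos (by positivity), ← Real.rpow_natCast w 2,
      ← Real.rpow_neg hw0.le]
    norm_num
  simp only [smul_eq_mul, inv_inv, h1, h2]
  rw [← mul_assoc, ← Real.rpow_add hw0]
  ring_nf

lemma besselK_Ioi0 (μ x : ℝ) (hx : 0 < x) :
    ∫ u in Ioi (0:ℝ), u^(-μ-1) * Real.exp (-((x/2)*(u + u⁻¹)))
      = 2 * besselK μ x := by
  have hx2 : (0:ℝ) < x/2 := by positivity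
  have hIoo : IntegrableOn (fun u : ℝ => u^(-μ-1) * Real.exp (-((x/2)*(u + u⁻¹)))) (Ioo 0 1) :=
    int_Ioo01_basset _ _ hx2
  have hIci : IntegrableOn (fun u : ℝ => u^(-μ-1) * Real.exp (-((x/2)*(u + u⁻¹)))) (Ici 1) := by
    rw [integrableOn_Ici_iff_integrableOn_Ioi]
    exact int_Ioi1_basset _ _ hx2
  have hdisj : Disjoint (Ioo (0:ℝ) 1) (Ici 1) := by
    rw [Set.disjoint_left]
    rintro a ⟨_, h1⟩ h2
    exact absurd h2 (not_le.2 h1)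
  have hsplit : Ioo (0:ℝ) 1 ∪ Ici 1 = Ioi 0 := Ioo_union_Ici_eq_Ioi zero_lt_one
  rw [← hsplit, setIntegral_union hdisj measurableSet_Ici hIoo hIci]
  rw [integral_Ici_eq_integral_Ioi, refl_Ioo01 μ x]
  have hsum : (∫ w in Ioi (1:ℝ), w^(μ-1) * Real.exp (-((x/2)*(w + w⁻¹))))
      + (∫ w in Ioi (1:ℝ), w^(-μ-1) * Real.exp (-((x/2)*(w + w⁻¹))))
      = ∫ w in Ioi (1:ℝ), (w^(μ-1) + w^(-μ-1)) * Real.exp (-((x/2)*(w + w⁻¹))) := by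
    rw [← integral_add (int_Ioi1_basset _ _ hx2) (int_Ioi1_basset _ _ hx2)]
    apply setIntegral_congr_fun measurableSet_Ioi
    intro w _
    ring
  rw [hsum, besselK_eq_Ioi1 μ x, ← MeasureTheory.integral_const_mul]
  apply setIntegral_congr_fun measurableSet_Ioi
  intro w _
  ring

lemma img_mul (a : ℝ) (ha : 0 < a) : (fun u : ℝ => a * u) '' Ioi 0 = Ioi 0 := by
  ext x
  constructor
  · rintro ⟨s, hs, rfl⟩; exact mul_pos ha hs
  · intro hx; exact ⟨x / a, div_pos hx ha, by field_simp⟩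

lemma besselK_C (μ x : ℝ) (hx : 0 < x) :
    ∫ t in Ioi (0:ℝ), t^(-μ-1) * Real.exp (-t - (x/2)^2/t)
      = (x/2)^(-μ) * (2 * besselK μ x) := by
  have hx2 : (0:ℝ) < x/2 := by positivity
  have hderiv : ∀ u ∈ Ioi (0:ℝ),
      HasDerivWithinAt (fun u : ℝ => (x/2) * u) (x/2) (Ioi 0) u := by
    intro u _
    simpa using ((hasDerivAt_id u).const_mul (x/2)).hasDerivWithinAt
  have hinj : InjOn (fun u : ℝ => (x/2) * u) (Ioi 0) :=
    fun u _ v _ huv => mul_left_cancel₀ hx2.ne' huv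
  have h := integral_image_eq_integral_abs_deriv_smul measurableSet_Ioi hderiv hinj
    (fun t : ℝ => t^(-μ-1) * Real.exp (-t - (x/2)^2/t))
  rw [img_mul (x/2) hx2] at h
  rw [h]
  have hcong : ∫ u in Ioi (0:ℝ),
      |x/2| • ((fun t : ℝ => t^(-μ-1) * Real.exp (-t - (x/2)^2/t)) ((x/2)*u))
      = ∫ u in Ioi (0:ℝ), (x/2)^(-μ) * (u^(-μ-1) * Real.exp (-((x/2)*(u + u⁻¹)))) := by
    apply setIntegral_congr_fun measurableSet_Ioi
    intro u hu
    have hu0 : (0:ℝ) < u := hu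
    have h1 : ((x/2)*u)^(-μ-1) = (x/2)^(-μ-1) * u^(-μ-1) :=
      Real.mul_rpow hx2.le hu0.le
    have h2 : -((x/2)*u) - (x/2)^2/((x/2)*u) = -((x/2)*(u + u⁻¹)) := by
      field_simp
      ring
    have h3 : |x/2| * (x/2)^(-μ-1) = (x/2)^(-μ) := by
      rw [abs_of_pos hx2]
      have h4 := (Real.rpow_add hx2 1 (-μ-1)).symm
      rw [Real.rpow_one] at h4
      rw [h4, show (1:ℝ) + (-μ-1) = -μ by ring]
    simp only [smul_eq_mul, h1, h2]
    calc |x/2| * ((x/2)^(-μ-1) * u^(-μ-1) * Real.exp (-((x/2)*(u + u⁻¹))))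
        = (|x/2| * (x/2)^(-μ-1)) * (u^(-μ-1) * Real.exp (-((x/2)*(u + u⁻¹)))) := by ring
    _ = (x/2)^(-μ) * (u^(-μ-1) * Real.exp (-((x/2)*(u + u⁻¹)))) := by rw [h3]
  rw [hcong, MeasureTheory.integral_const_mul, besselK_Ioi0 μ x hx]

lemma swap_step (ν x : ℝ) (hν : 0 < ν) (hx : 0 < x) :
    ∫ r in Ioi (0:ℝ), r^(ν-1) *
        (∫ t in Ioi (0:ℝ), t^(-(1:ℝ)/2) * Real.exp (-((1+r)*t) - (x/2)^2/t))
      = Real.Gamma ν *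
        ∫ t in Ioi (0:ℝ), t^(-(ν-1/2)-1) * Real.exp (-t - (x/2)^2/t) := by
  set c : ℝ := (x/2)^2 with hc
  have hc0 : 0 < c := by positivity
  set F : ℝ → ℝ → ℝ :=
    fun r t => r^(ν-1) * (t^(-(1:ℝ)/2) * Real.exp (-((1+r)*t) - c/t)) with hF
  have hmeas : Measurable (Function.uncurry F) := by
    apply Measurable.mul
    · exact (measurable_fst.pow_const _)
    · apply Measurable.mul
      · exact (measurable_snd.pow_const _)
      · apply Real.measurable_exp.comp
        apply Measurable.sub
        · exact ((measurable_const.add measurable_fst).mul measurable_snd).neg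
        · exact measurable_const.div measurable_snd
  have key_r : ∀ r ∈ Ioi (0:ℝ), IntegrableOn (F r) (Ioi 0) := by
    intro r hr
    have hr0 : (0:ℝ) < r := hr
    exact (int_rpow_exp_exp (-(1:ℝ)/2) (1+r) c (by norm_num) (by linarith) hc0.le).const_mul _
  have key_t : ∀ t ∈ Ioi (0:ℝ), IntegrableOn (fun r => F r t) (Ioi 0) := by
    intro t ht
    have ht0 : (0:ℝ) < t := ht
    apply MeasureTheory.IntegrableOn.congr_fun
      ((int_rpow_exp (ν-1) t (by linarith) ht0).const_mul
        (t^(-(1:ℝ)/2) * Real.exp (-t - c/t))) ?_ measurableSet_Ioi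
    intro r hr
    have heq : -((1+r)*t) - c/t = (-t - c/t) + (-(t*r)) := by ring
    rw [hF]
    simp only
    rw [heq, Real.exp_add]
    ring
  have value_r : ∀ t ∈ Ioi (0:ℝ), (∫ r in Ioi (0:ℝ), F r t)
      = Real.Gamma ν * ((1/t)^ν * (t^(-(1:ℝ)/2) * Real.exp (-t - c/t))) := by
    intro t ht
    have ht0 : (0:ℝ) < t := ht
    have hcong : ∫ r in Ioi (0:ℝ), F r t
        = ∫ r in Ioi (0:ℝ), (t^(-(1:ℝ)/2) * Real.exp (-t - c/t)) * (r^(ν-1) * Real.exp (-(t*r))) := by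
      apply setIntegral_congr_fun measurableSet_Ioi
      intro r hr
      have : -((1+r)*t) - c/t = (-t - c/t) + (-(t*r)) := by ring
      rw [hF]
      simp only
      rw [this, Real.exp_add]
      ring
    rw [hcong, MeasureTheory.integral_const_mul, integral_rpow_mul_exp_neg_mul_Ioi hν ht0]
    ring
  -- outer integrand rewrite
  have hout : ∫ r in Ioi (0:ℝ), r^(ν-1) *
        (∫ t in Ioi (0:ℝ), t^(-(1:ℝ)/2) * Real.exp (-((1+r)*t) - c/t))
      = ∫ r in Ioi (0:ℝ), (∫ t in Ioi (0:ℝ), F r t) := by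
    apply setIntegral_congr_fun measurableSet_Ioi
    intro r _
    rw [hF]
    simp only
    rw [MeasureTheory.integral_const_mul]
  rw [hout]
  have haesm1 : AEStronglyMeasurable (fun r => ∫ t in Ioi (0:ℝ), F r t)
      (volume.restrict (Ioi 0)) :=
    (hmeas.stronglyMeasurable.integral_prod_right').aestronglyMeasurable
  have h1 : ∫ r in Ioi (0:ℝ), (∫ t in Ioi (0:ℝ), F r t)
      = ENNReal.toReal (∫⁻ r in Ioi (0:ℝ), ENNReal.ofReal (∫ t in Ioi (0:ℝ), F r t)) := by
    apply integral_eq_lintegral_of_nonneg_ae ?_ haesm1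
    filter_upwards [ae_restrict_mem measurableSet_Ioi] with r hr
    apply setIntegral_nonneg measurableSet_Ioi
    intro t ht
    have hr0 : (0:ℝ) < r := hr
    have ht0 : (0:ℝ) < t := ht
    rw [hF]
    positivity
  have h2 : ∫⁻ r in Ioi (0:ℝ), ENNReal.ofReal (∫ t in Ioi (0:ℝ), F r t)
      = ∫⁻ r in Ioi (0:ℝ), ∫⁻ t in Ioi (0:ℝ), ENNReal.ofReal (F r t) := by
    apply setLIntegral_congr_fun measurableSet_Ioi
    intro r hr
    have hr0 : (0:ℝ) < r := hr
    apply MeasureTheory.ofReal_integral_eq_lintegral_ofReal (key_r r hr)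
    filter_upwards [ae_restrict_mem measurableSet_Ioi] with t ht
    have ht0 : (0:ℝ) < t := ht
    rw [hF]
    positivity
  have h3 : ∫⁻ r in Ioi (0:ℝ), ∫⁻ t in Ioi (0:ℝ), ENNReal.ofReal (F r t)
      = ∫⁻ t in Ioi (0:ℝ), ∫⁻ r in Ioi (0:ℝ), ENNReal.ofReal (F r t) := by
    apply lintegral_lintegral_swap
    exact (ENNReal.measurable_ofReal.comp hmeas).aemeasurable
  have h4 : ∫⁻ t in Ioi (0:ℝ), ∫⁻ r in Ioi (0:ℝ), ENNReal.ofReal (F r t)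
      = ∫⁻ t in Ioi (0:ℝ), ENNReal.ofReal
          (Real.Gamma ν * ((1/t)^ν * (t^(-(1:ℝ)/2) * Real.exp (-t - c/t)))) := by
    apply setLIntegral_congr_fun measurableSet_Ioi
    intro t ht
    have ht0 : (0:ℝ) < t := ht
    beta_reduce
    rw [← value_r t ht]
    symm
    apply MeasureTheory.ofReal_integral_eq_lintegral_ofReal (key_t t ht)
    filter_upwards [ae_restrict_mem measurableSet_Ioi] with r hr
    have hr0 : (0:ℝ) < r := hr
    rw [hF]
    positivity
  have h5 : ENNReal.toReal (∫⁻ t in Ioi (0:ℝ), ENNReal.ofReal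
          (Real.Gamma ν * ((1/t)^ν * (t^(-(1:ℝ)/2) * Real.exp (-t - c/t)))))
      = ∫ t in Ioi (0:ℝ), Real.Gamma ν * ((1/t)^ν * (t^(-(1:ℝ)/2) * Real.exp (-t - c/t))) := by
    symm
    apply integral_eq_lintegral_of_nonneg_ae
    · filter_upwards [ae_restrict_mem measurableSet_Ioi] with t ht
      have ht0 : (0:ℝ) < t := ht
      have := Real.Gamma_pos_of_pos hν
      positivity
    · apply Measurable.aestronglyMeasurable
      fun_prop
  rw [h1, h2, h3, h4, h5, MeasureTheory.integral_const_mul]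
  congr 1
  apply setIntegral_congr_fun measurableSet_Ioi
  intro t ht
  have ht0 : (0:ℝ) < t := ht
  simp only
  rw [one_div, ← Real.rpow_neg_one t, ← Real.rpow_mul ht0.le, ← mul_assoc,
    ← Real.rpow_add ht0]
  congr 2
  ring

lemma img_affine (h : ℝ) (hh : 0 < h) : (fun y : ℝ => h/2 * (y - 1)) '' Ioi 1 = Ioi 0 := by
  ext x
  constructor
  · rintro ⟨s, hs, rfl⟩
    have h1 : (0:ℝ) < s - 1 := by linarith [mem_Ioi.1 hs]
    exact mem_Ioi.2 (mul_pos (by positivity) h1)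
  · intro hx
    have hx0 : (0:ℝ) < x := hx
    have h2 : (0:ℝ) < 2*x/h := by positivity
    refine ⟨1 + 2*x/h, mem_Ioi.2 (by linarith), by field_simp; ring⟩

lemma step1 (ν lam h : ℝ) (hlam : 0 < lam) (hh : 0 < h) :
    ∫ t in Ioi (0:ℝ), (t * (t + h)) ^ (ν - 1) * Real.exp (-lam * t)
      = (Real.exp (lam*h/2) * (h/2)^(2*ν-1)) *
        ∫ y in Ioi (1:ℝ), (y^2-1)^(ν-1) * Real.exp (-(lam*h/2 * y)) := by
  have hderiv : ∀ y ∈ Ioi (1:ℝ),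
      HasDerivWithinAt (fun y : ℝ => h/2 * (y - 1)) (h/2) (Ioi 1) y := by
    intro y _
    simpa using (((hasDerivAt_id y).sub_const 1).const_mul (h/2)).hasDerivWithinAt
  have hinj : InjOn (fun y : ℝ => h/2 * (y - 1)) (Ioi 1) := by
    intro a _ b _ hab
    simp only at hab
    have := mul_left_cancel₀ (by positivity : (h/2 : ℝ) ≠ 0) hab
    linarith
  have hi := integral_image_eq_integral_abs_deriv_smul measurableSet_Ioi hderiv hinj
    (fun t : ℝ => (t * (t + h)) ^ (ν - 1) * Real.exp (-lam * t))
  rw [img_affine h hh] at hi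
  rw [hi, ← MeasureTheory.integral_const_mul]
  apply setIntegral_congr_fun measurableSet_Ioi
  intro y hy
  have hy1 : (1:ℝ) < y := hy
  have hprod : h/2 * (y - 1) * (h/2 * (y - 1) + h) = (h/2)^2 * (y^2 - 1) := by ring
  have hy2 : (0:ℝ) ≤ y^2 - 1 := by nlinarith
  have h1 : (h/2 * (y - 1) * (h/2 * (y - 1) + h)) ^ (ν-1)
      = ((h/2)^2)^(ν-1) * (y^2-1)^(ν-1) := by
    rw [hprod, Real.mul_rpow (by positivity) hy2]
  have h2 : Real.exp (-lam * (h/2 * (y - 1)))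
      = Real.exp (lam*h/2) * Real.exp (-(lam*h/2 * y)) := by
    rw [← Real.exp_add]
    congr 1
    ring
  have h3 : |h/2| * ((h/2)^2)^(ν-1) = (h/2)^(2*ν-1) := by
    rw [abs_of_pos (by positivity : (0:ℝ) < h/2), ← Real.rpow_natCast (h/2) 2,
      ← Real.rpow_mul (by positivity : (0:ℝ) ≤ h/2)]
    have h4 := (Real.rpow_add (by positivity : (0:ℝ) < h/2) 1 ((2:ℕ)*(ν-1))).symm
    rw [Real.rpow_one] at h4
    rw [h4]
    congr 1
    push_cast
    ring
  simp only [smul_eq_mul, h1, h2]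
  rw [← h3]
  ring

lemma img_sqrt : (fun r : ℝ => Real.sqrt (1 + r)) '' Ioi 0 = Ioi 1 := by
  ext x
  constructor
  · rintro ⟨s, hs, rfl⟩
    have hs' : (0:ℝ) < s := hs
    exact mem_Ioi.2 ((Real.lt_sqrt (by norm_num)).2 (by nlinarith))
  · intro hx
    have hx1 : (1:ℝ) < x := hx
    refine ⟨x^2 - 1, mem_Ioi.2 (by nlinarith), ?_⟩
    simp only []
    rw [show 1 + (x^2 - 1) = x^2 by ring, Real.sqrt_sq (by positivity)]

lemma step2 (ν x : ℝ) :
    ∫ y in Ioi (1:ℝ), (y^2-1)^(ν-1) * Real.exp (-(x * y))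
      = (1/2) * ∫ r in Ioi (0:ℝ),
          r^(ν-1) * ((Real.sqrt (1+r))⁻¹ * Real.exp (-(x * Real.sqrt (1+r)))) := by
  have hderiv : ∀ r ∈ Ioi (0:ℝ),
      HasDerivWithinAt (fun r : ℝ => Real.sqrt (1 + r)) (1/(2*Real.sqrt (1+r))) (Ioi 0) r := by
    intro r hr
    have hr0 : (0:ℝ) < r := hr
    have h1 : HasDerivAt (fun r : ℝ => 1 + r) 1 r := by
      simpa using (hasDerivAt_id r).const_add 1
    have h2 := (Real.hasDerivAt_sqrt (by positivity : (1:ℝ) + r ≠ 0)).comp r h1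
    exact h2.hasDerivWithinAt.congr_deriv (by ring)
  have hinj : InjOn (fun r : ℝ => Real.sqrt (1 + r)) (Ioi 0) := by
    intro a ha b hb hab
    simp only at hab
    have ha0 : (0:ℝ) < a := ha
    have hb0 : (0:ℝ) < b := hb
    have := congrArg (fun z : ℝ => z^2) hab
    simp only [Real.sq_sqrt (by linarith : (0:ℝ) ≤ 1 + a),
      Real.sq_sqrt (by linarith : (0:ℝ) ≤ 1 + b)] at this
    linarith
  have hi := integral_image_eq_integral_abs_deriv_smul measurableSet_Ioi hderiv hinj
    (fun y : ℝ => (y^2-1)^(ν-1) * Real.exp (-(x * y)))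
  rw [img_sqrt] at hi
  rw [hi, ← MeasureTheory.integral_const_mul]
  apply setIntegral_congr_fun measurableSet_Ioi
  intro r hr
  have hr0 : (0:ℝ) < r := hr
  have hs0 : (0:ℝ) < Real.sqrt (1+r) := Real.sqrt_pos.2 (by linarith)
  have h1 : (Real.sqrt (1+r))^2 - 1 = r := by
    rw [Real.sq_sqrt (by linarith : (0:ℝ) ≤ 1 + r)]
    ring
  have h2 : |1/(2*Real.sqrt (1+r))| = 1/(2*Real.sqrt (1+r)) := abs_of_pos (by positivity)
  simp only [smul_eq_mul, h1, h2]
  field_simp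

theorem gamma_kernel_shifted_product_integral (ν lam h : ℝ) (hν : 1 / 2 < ν)
    (hlam : 0 < lam) (hh : 0 < h) :
    ∫ t in Ioi (0:ℝ), (t * (t + h)) ^ (ν - 1) * Real.exp (-lam * t)
      = (1 / Real.sqrt π) * (h / lam) ^ (ν - 1 / 2) * Real.exp (lam * h / 2) *
          Real.Gamma ν * besselK (1 / 2 - ν) (lam * h / 2) := by
  have hν0 : (0:ℝ) < ν := by linarith
  have hx : (0:ℝ) < lam*h/2 := by positivity
  have hsπ : (0:ℝ) < Real.sqrt π := Real.sqrt_pos.2 pi_pos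
  rw [step1 ν lam h hlam hh]
  have hB := step2 ν (lam*h/2)
  rw [hB]
  have hGl : ∫ r in Ioi (0:ℝ),
        r^(ν-1) * ((Real.sqrt (1+r))⁻¹ * Real.exp (-(lam*h/2 * Real.sqrt (1+r))))
      = (Real.sqrt π)⁻¹ * ∫ r in Ioi (0:ℝ), r^(ν-1) *
          (∫ t in Ioi (0:ℝ), t^(-(1:ℝ)/2) * Real.exp (-((1+r)*t) - (lam*h/2/2)^2/t)) := by
    rw [← MeasureTheory.integral_const_mul]
    apply setIntegral_congr_fun measurableSet_Ioi
    intro r hr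
    have hr0 : (0:ℝ) < r := hr
    have h1r : (0:ℝ) < 1+r := by linarith
    simp only
    rw [glasser (1+r) ((lam*h/2/2)^2) h1r (by positivity)]
    rw [Real.sqrt_div (by positivity : (0:ℝ) ≤ π) _,
      Real.sqrt_mul h1r.le, Real.sqrt_sq (by positivity : (0:ℝ) ≤ lam*h/2/2),
      show -(2 * (Real.sqrt (1+r) * (lam*h/2/2))) = -(lam*h/2 * Real.sqrt (1+r)) by ring]
    have hs1r : (0:ℝ) < Real.sqrt (1+r) := Real.sqrt_pos.2 h1r
    field_simp
  rw [hGl, swap_step ν (lam*h/2) hν0 hx, besselK_C (ν-1/2) (lam*h/2) hx]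
  rw [show (1/2 - ν : ℝ) = -(ν-1/2) by ring, besselK_neg]
  -- now pure constant arithmetic
  have e1 : ((h/2:ℝ))^(2*ν-1) = ((h/2)^2)^(ν-1/2) := by
    rw [← Real.rpow_natCast (h/2) 2, ← Real.rpow_mul (by positivity : (0:ℝ) ≤ h/2)]
    congr 1
    push_cast
    ring
  have e2 : ((lam*h/2/2:ℝ))^(-(ν-1/2)) = ((lam*h/2/2)⁻¹)^(ν-1/2) := by
    rw [Real.rpow_neg (by positivity : (0:ℝ) ≤ lam*h/2/2),
      ← Real.inv_rpow (by positivity : (0:ℝ) ≤ lam*h/2/2)]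
  have e3 : ((h/2:ℝ)^2)^(ν-1/2) * ((lam*h/2/2)⁻¹)^(ν-1/2) = (h/lam)^(ν-1/2) := by
    rw [← Real.mul_rpow (by positivity) (by positivity)]
    congr 1
    field_simp
  rw [e1, e2]
  calc Real.exp (lam*h/2) * ((h/2)^2)^(ν-1/2) *
        (1/2 * ((Real.sqrt π)⁻¹ * (Real.Gamma ν *
          (((lam*h/2/2)⁻¹)^(ν-1/2) * (2 * besselK (ν-1/2) (lam*h/2))))))
      = (1 / Real.sqrt π) * (((h/2)^2)^(ν-1/2) * ((lam*h/2/2)⁻¹)^(ν-1/2)) *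
          Real.exp (lam*h/2) * Real.Gamma ν * besselK (ν-1/2) (lam*h/2) := by
        field_simp
  _ = _ := by rw [e3]
end

section
/- Suppose G : {(T,t) : t ≤ T} → (0,∞) is continuously differentiable in its first argument and the ratio G(T,s)/G(t,s) is independent of s for all s ≤ t ≤ T (i.e. equals some function ξ(T,t)). Then G factorizes: there exist functions g₁, g₂ such that G(t,s) = g₁(t) g₂(s); explicitly G(t,s) = G(s,s) exp(∫_s^t ξ_T(u,u) du), where ξ_T denotes the partial derivative of ξ in its first argument. -/
open Set intervalIntegral

/-- If the kernel ratio `G(T,s)/G(t,s)` is independent of `s`, then the kernel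
factorizes multiplicatively, with the explicit exponential representation. -/
theorem kernel_separation_of_affine (G : ℝ → ℝ → ℝ) (ξ : ℝ → ℝ → ℝ) (ξT : ℝ → ℝ)
    (hpos : ∀ t s : ℝ, s ≤ t → 0 < G t s)
    (hdiffG : ∀ s t : ℝ, s ≤ t → DifferentiableAt ℝ (fun T => G T s) t)
    (hratio : ∀ T t s : ℝ, s ≤ t → t ≤ T → G T s = ξ T t * G t s)
    (hξder : ∀ u : ℝ, HasDerivAt (fun T => ξ T u) (ξT u) u)
    (hξTcont : Continuous ξT) :
    (∀ t s : ℝ, s ≤ t → G t s = G s s * Real.exp (∫ u in s..t, ξT u)) ∧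
      ∃ g₁ g₂ : ℝ → ℝ, ∀ t s : ℝ, s ≤ t → G t s = g₁ t * g₂ s := by
  -- The ODE: for s ≤ t, the derivative of T ↦ G T s at t is ξT t * G t s.
  have hG' : ∀ s t : ℝ, s ≤ t → HasDerivAt (fun T => G T s) (ξT t * G t s) t := by
    intro s t hst
    have h1 : HasDerivWithinAt (fun T => ξ T t * G t s) (ξT t * G t s) (Ici t) t :=
      ((hξder t).mul_const (G t s)).hasDerivWithinAt
    have h2 : HasDerivWithinAt (fun T => G T s) (ξT t * G t s) (Ici t) t :=
      h1.congr (fun x hx => hratio x t s hst hx) (hratio t t s hst le_rfl)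
    have hD : HasDerivAt (fun T => G T s) (deriv (fun T => G T s) t) t :=
      (hdiffG s t hst).hasDerivAt
    have heq : deriv (fun T => G T s) t = ξT t * G t s := by
      have u := uniqueDiffOn_Ici t t Set.self_mem_Ici
      have e1 := h2.derivWithin u
      have e2 := hD.hasDerivWithinAt.derivWithin u
      rw [← e1, ← e2]
    rw [← heq]; exact hD
  have main : ∀ t s : ℝ, s ≤ t → G t s = G s s * Real.exp (∫ u in s..t, ξT u) := by
    intro t s hst
    set F : ℝ → ℝ := fun x => ∫ u in s..x, ξT u with hF
    have hFder : ∀ x : ℝ, HasDerivAt F (ξT x) x := fun x =>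
      (hξTcont.integral_hasStrictDerivAt s x).hasDerivAt
    have hfder : ∀ x : ℝ, s ≤ x →
        HasDerivAt (fun y => G y s * Real.exp (-F y)) 0 x := by
      intro x hx
      have h : HasDerivAt (fun y => G y s * Real.exp (-F y))
          (ξT x * G x s * Real.exp (-F x) + G x s * (Real.exp (-F x) * -ξT x)) x :=
        (hG' s x hx).mul ((hFder x).neg.exp)
      convert h using 1
      ring
    have hconst : G t s * Real.exp (-F t) = G s s * Real.exp (-F s) := by
      have hc : ContinuousOn (fun y => G y s * Real.exp (-F y)) (Icc s t) :=
        fun x hx => ((hfder x hx.1).differentiableAt.continuousAt).continuousWithinAt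
      have hd : ∀ x ∈ Ico s t,
          HasDerivWithinAt (fun y => G y s * Real.exp (-F y)) 0 (Ici x) x :=
        fun x hx => (hfder x hx.1).hasDerivWithinAt
      exact constant_of_has_deriv_right_zero hc hd t (right_mem_Icc.2 hst)
    have hFs : F s = 0 := intervalIntegral.integral_same
    rw [hFs, neg_zero, Real.exp_zero, mul_one] at hconst
    have hene : Real.exp (-F t) ≠ 0 := Real.exp_ne_zero _
    have : G t s = G s s * Real.exp (F t) := by
      rw [← hconst]
      rw [mul_assoc, ← Real.exp_add]
      simp
    exact this
  refine ⟨main, ⟨fun t => Real.exp (∫ u in (0:ℝ)..t, ξT u),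
    fun s => G s s * Real.exp (-(∫ u in (0:ℝ)..s, ξT u)), ?_⟩⟩
  intro t s hst
  rw [main t s hst]
  have hint : (∫ u in s..t, ξT u) = (∫ u in (0:ℝ)..t, ξT u) - (∫ u in (0:ℝ)..s, ξT u) := by
    rw [← intervalIntegral.integral_interval_sub_left
      (hξTcont.intervalIntegrable 0 t) (hξTcont.intervalIntegrable 0 s)]
  rw [hint, sub_eq_add_neg, Real.exp_add]
  ring
end
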